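/- arXiv:0801.0086 — 4 statements merged into one kernel-verified Lean document; each statement's English description precedes it below -/
import Mathlib

section
/- Any two distinct associated primes of R are connected by an edge in Γ_E(R); that is, if ann(x) and ann(y) are distinct prime ideals, then xy = 0. -/
open scoped Classical

noncomputable section

/-- The annihilator ideal of an element `x` of a commutative ring `R`. -/
def ann (R : Type*) [CommRing R] (x : R) : Ideal R := Ideal.torsionOf R R x

/-- The type of nonzero zero divisors of `R`. -/
def ZD (R : Type*) [CommRing R] : Type _ :=
  {x : R // x ≠ 0 ∧ ∃ y : R, y ≠ 0 ∧ x * y = 0}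

/-- Two zero divisors are equivalent iff they have the same annihilator. -/
instance annSetoid (R : Type*) [CommRing R] : Setoid (ZD R) :=
  ⟨fun a b => ann R a.1 = ann R b.1,
   fun _ => rfl, Eq.symm, Eq.trans⟩

/-- The vertex set of `Γ_E(R)`: equivalence classes of nonzero zero divisors. -/
def GammaEV (R : Type*) [CommRing R] : Type _ := Quotient (annSetoid R)

/-- The class of a nonzero zero divisor. -/
def cls (R : Type*) [CommRing R] (a : ZD R) : GammaEV R :=
  Quotient.mk (annSetoid R) a

/-- The graph `Γ_E(R)` of equivalence classes of zero divisors. -/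
def gammaE (R : Type*) [CommRing R] : SimpleGraph (GammaEV R) where
  Adj u v := u ≠ v ∧ ∃ a b : ZD R, cls R a = u ∧ cls R b = v ∧ a.1 * b.1 = 0
  symm := by
    constructor
    rintro u v ⟨huv, a, b, ha, hb, hab⟩
    exact ⟨huv.symm, b, a, hb, ha, by rwa [mul_comm] at hab⟩
  loopless := by constructor; rintro u ⟨h, -⟩; exact h rfl

/-- `I` is a maximal element of the family `F = {ann x : 0 ≠ x ∈ R}`. -/
def MaxAnn (R : Type*) [CommRing R] (I : Ideal R) : Prop :=
  (∃ x : R, x ≠ 0 ∧ I = ann R x) ∧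
    ∀ y : R, y ≠ 0 → I ≤ ann R y → I = ann R y

lemma mem_ann_iff {R : Type*} [CommRing R] {a x : R} : a ∈ ann R x ↔ a * x = 0 := by
  simp [ann, Ideal.mem_torsionOf_iff, smul_eq_mul]

lemma aux {R : Type*} [CommRing R] {x y a : R} (hy : (ann R y).IsPrime)
    (ha : a ∉ ann R y) (h : a * x = 0) : x * y = 0 := by
  have hxa : x * a ∈ ann R y := by
    rw [mem_ann_iff]
    rw [mul_assoc]  -- x * (a * y)
    calc x * (a * y) = (a * x) * y := by ring
    _ = 0 := by rw [h, zero_mul]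
  rcases hy.mem_or_mem hxa with hx | hb
  · exact mem_ann_iff.mp hx
  · exact absurd hb ha

theorem stmt1 (R : Type*) [CommRing R] [IsNoetherianRing R] (x y : R)
    (hx : (ann R x).IsPrime) (hy : (ann R y).IsPrime)
    (hne : ann R x ≠ ann R y) : x * y = 0 := by
  by_cases hle : ann R x ≤ ann R y
  · have : ¬ ann R y ≤ ann R x := fun h => hne (le_antisymm hle h)
    obtain ⟨a, hay, hax⟩ := Set.not_subset.mp this
    rw [mul_comm]
    exact aux hx hax (mem_ann_iff.mp hay)
  · obtain ⟨a, hax, hay⟩ := Set.not_subset.mp hle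
    exact aux hy hay (mem_ann_iff.mp hax)
end
end

section
/- If Γ_E(R) is a fan graph K_{n,1} with at least four vertices, then R has a unique associated prime p, p³ = 0, and the characteristic of R is 2, 4, or 8. -/
open scoped Classical

noncomputable section

theorem stmt11 (R : Type*) [CommRing R] [IsNoetherianRing R]
    (hcard : 4 ≤ (Set.univ : Set (GammaEV R)).encard)
    (c : GammaEV R)
    (hcenter : ∀ v : GammaEV R, v ≠ c → (gammaE R).Adj c v)
    (hindep : ∀ u v : GammaEV R, u ≠ c → v ≠ c → ¬ (gammaE R).Adj u v) :
    (∃ p : Ideal R, (p.IsPrime ∧ ∃ z : R, z ≠ 0 ∧ p = ann R z) ∧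
      (∀ q : Ideal R, (q.IsPrime ∧ ∃ z : R, z ≠ 0 ∧ q = ann R z) → q = p) ∧
      p ^ 3 = ⊥) ∧
    (ringChar R = 2 ∨ ringChar R = 4 ∨ ringChar R = 8) := by
  classical
  obtain ⟨zZ, hzc⟩ := Quotient.exists_rep c
  have hz0 : zZ.1 ≠ 0 := zZ.2.1
  have mem_ann : ∀ (x m : R), m ∈ ann R x ↔ m * x = 0 := fun x m => by
    rw [ann, Ideal.mem_torsionOf_iff, smul_eq_mul]
  have cls_eq : ∀ a b : ZD R, cls R a = cls R b ↔ ann R a.1 = ann R b.1 :=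
    fun a b => ⟨fun h => Quotient.exact h, fun h => Quotient.sound h⟩
  have adj_imp : ∀ a b : ZD R, (gammaE R).Adj (cls R a) (cls R b) → a.1 * b.1 = 0 := by
    rintro a b ⟨hne, a', b', ha', hb', hab⟩
    have ea : ann R a'.1 = ann R a.1 := (cls_eq a' a).1 ha'
    have eb : ann R b'.1 = ann R b.1 := (cls_eq b' b).1 hb'
    have h1 : b'.1 * a.1 = 0 := by
      have h : b'.1 ∈ ann R a'.1 := (mem_ann _ _).2 (by rw [mul_comm]; exact hab)
      rw [ea] at h
      exact (mem_ann _ _).1 h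
    have h2 : a.1 ∈ ann R b'.1 := (mem_ann _ _).2 (by rw [mul_comm]; exact h1)
    rw [eb] at h2
    exact (mem_ann _ _).1 h2
  have nonadj : ∀ a b : ZD R, cls R a ≠ c → cls R b ≠ c → cls R a ≠ cls R b →
      a.1 * b.1 ≠ 0 := by
    intro a b ha hb hab h0
    exact hindep _ _ ha hb ⟨hab, a, b, rfl, rfl, h0⟩
  have center_mul : ∀ b : ZD R, cls R b ≠ c → b.1 * zZ.1 = 0 := by
    intro b hb
    have hadj := hcenter (cls R b) hb
    rw [← hzc] at hadj
    have h := adj_imp zZ b hadj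
    rw [mul_comm] at h
    exact h
  -- three distinct non-center vertices
  obtain ⟨v₁, v₂, v₃, hv1c, hv2c, hv3c, h12, h13, h23⟩ :
      ∃ v₁ v₂ v₃ : GammaEV R, v₁ ≠ c ∧ v₂ ≠ c ∧ v₃ ≠ c ∧ v₁ ≠ v₂ ∧ v₁ ≠ v₃ ∧ v₂ ≠ v₃ := by
    have hc : c ∈ (Set.univ : Set (GammaEV R)) := Set.mem_univ c
    have h1 : ((Set.univ : Set (GammaEV R)) \ {c}).encard + 1
        = (Set.univ : Set (GammaEV R)).encard :=
      Set.encard_diff_singleton_add_one hc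
    have h3 : (3 : ℕ∞) ≤ ((Set.univ : Set (GammaEV R)) \ {c}).encard := by
      have h4 : (3 : ℕ∞) + 1 ≤ ((Set.univ : Set (GammaEV R)) \ {c}).encard + 1 := by
        rw [h1]
        exact le_trans (by norm_num) hcard
      exact (WithTop.add_le_add_iff_right WithTop.one_ne_top).1 h4
    obtain ⟨w₁, hw₁⟩ := Set.encard_pos.1 (lt_of_lt_of_le (by norm_num) h3)
    have h2' : (1 : ℕ∞) < ((((Set.univ : Set (GammaEV R)) \ {c}) \ {w₁})).encard := by
      have h5 := Set.encard_diff_singleton_add_one hw₁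
      have h6 : (2 : ℕ∞) + 1 ≤ ((((Set.univ : Set (GammaEV R)) \ {c}) \ {w₁})).encard + 1 := by
        rw [h5]
        exact le_trans (by norm_num) h3
      have h7 := (WithTop.add_le_add_iff_right WithTop.one_ne_top).1 h6
      exact lt_of_lt_of_le (by norm_num) h7
    obtain ⟨w₂, w₃, hw₂, hw₃, hne⟩ := Set.one_lt_encard_iff.1 h2'
    refine ⟨w₁, w₂, w₃, ?_, ?_, ?_, ?_, ?_, hne⟩
    · simpa using hw₁.2
    · simpa using hw₂.1.2
    · simpa using hw₃.1.2
    · exact fun h => hw₂.2 (Set.mem_singleton_iff.2 h.symm)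
    · exact fun h => hw₃.2 (Set.mem_singleton_iff.2 h.symm)
  obtain ⟨x₁, hxv1⟩ := Quotient.exists_rep v₁
  obtain ⟨x₂, hxv2⟩ := Quotient.exists_rep v₂
  obtain ⟨x₃, hxv3⟩ := Quotient.exists_rep v₃
  have hx1c : cls R x₁ ≠ c := by rw [show cls R x₁ = v₁ from hxv1]; exact hv1c
  have hx2c : cls R x₂ ≠ c := by rw [show cls R x₂ = v₂ from hxv2]; exact hv2c
  have hx3c : cls R x₃ ≠ c := by rw [show cls R x₃ = v₃ from hxv3]; exact hv3c
  have hx12 : cls R x₁ ≠ cls R x₂ := by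
    rw [show cls R x₁ = v₁ from hxv1, show cls R x₂ = v₂ from hxv2]; exact h12
  have hx13 : cls R x₁ ≠ cls R x₃ := by
    rw [show cls R x₁ = v₁ from hxv1, show cls R x₃ = v₃ from hxv3]; exact h13
  have hx23 : cls R x₂ ≠ cls R x₃ := by
    rw [show cls R x₂ = v₂ from hxv2, show cls R x₃ = v₃ from hxv3]; exact h23
  -- helper: if x is a leaf with x² ≠ 0 then every annihilator element of x kills any leaf y
  have sq_helper : ∀ x y : ZD R, cls R x ≠ c → cls R y ≠ c → x.1 * x.1 ≠ 0 →
      ∀ m : R, m * x.1 = 0 → m * y.1 = 0 := by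
    intro x y hx hy hx2 m hm
    by_cases hm0 : m = 0
    · rw [hm0, zero_mul]
    · have mZ : ZD R := ⟨m, hm0, x.1, x.2.1, hm⟩
      by_cases hmc : cls R (⟨m, hm0, x.1, x.2.1, hm⟩ : ZD R) = c
      · have e : ann R m = ann R zZ.1 :=
          (cls_eq (⟨m, hm0, x.1, x.2.1, hm⟩ : ZD R) zZ).1 (hmc.trans hzc.symm)
        have hyz : y.1 * zZ.1 = 0 := center_mul y hy
        have h : y.1 ∈ ann R m := by rw [e]; exact (mem_ann _ _).2 hyz
        have h' := (mem_ann _ _).1 h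
        rw [mul_comm] at h'
        exact h'
      · by_cases hmx : cls R (⟨m, hm0, x.1, x.2.1, hm⟩ : ZD R) = cls R x
        · have e : ann R m = ann R x.1 :=
            (cls_eq (⟨m, hm0, x.1, x.2.1, hm⟩ : ZD R) x).1 hmx
          have hxm : x.1 ∈ ann R m := (mem_ann _ _).2 (by rw [mul_comm]; exact hm)
          rw [e] at hxm
          exact absurd ((mem_ann _ _).1 hxm) hx2
        · exact absurd hm (nonadj (⟨m, hm0, x.1, x.2.1, hm⟩ : ZD R) x hmc hx hmx)
  have sq_lemma : ∀ x y : ZD R, cls R x ≠ c → cls R y ≠ c → cls R x ≠ cls R y →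
      x.1 * x.1 ≠ 0 → y.1 * y.1 ≠ 0 → False := by
    intro x y hx hy hxy hx2 hy2
    apply hxy
    apply (cls_eq x y).2
    ext m
    rw [mem_ann, mem_ann]
    exact ⟨sq_helper x y hx hy hx2 m, sq_helper y x hy hx hy2 m⟩
  -- two distinct isotropic leaves u, w
  obtain ⟨u, w, huc, hwc, huw_ne, hu2, hw2⟩ :
      ∃ u w : ZD R, cls R u ≠ c ∧ cls R w ≠ c ∧ cls R u ≠ cls R w ∧
        u.1 * u.1 = 0 ∧ w.1 * w.1 = 0 := by
    by_cases h1 : x₁.1 * x₁.1 = 0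
    · by_cases h2 : x₂.1 * x₂.1 = 0
      · exact ⟨x₁, x₂, hx1c, hx2c, hx12, h1, h2⟩
      · by_cases h3 : x₃.1 * x₃.1 = 0
        · exact ⟨x₁, x₃, hx1c, hx3c, hx13, h1, h3⟩
        · exact (sq_lemma x₂ x₃ hx2c hx3c hx23 h2 h3).elim
    · by_cases h2 : x₂.1 * x₂.1 = 0
      · by_cases h3 : x₃.1 * x₃.1 = 0
        · exact ⟨x₂, x₃, hx2c, hx3c, hx23, h2, h3⟩
        · exact (sq_lemma x₁ x₃ hx1c hx3c hx13 h1 h3).elim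
      · exact (sq_lemma x₁ x₂ hx1c hx2c hx12 h1 h2).elim
  have huz : u.1 * zZ.1 = 0 := center_mul u huc
  have hwz : w.1 * zZ.1 = 0 := center_mul w hwc
  have huw : u.1 * w.1 ≠ 0 := nonadj u w huc hwc huw_ne
  -- the center squares to zero
  have hz2 : zZ.1 * zZ.1 = 0 := by
    by_contra hz2
    have hs0 : u.1 + zZ.1 ≠ 0 := by
      intro h0
      apply hz2
      have hz' : zZ.1 = -u.1 := eq_neg_of_add_eq_zero_right h0
      rw [hz', neg_mul_neg]
      exact hu2
    have hsu : (u.1 + zZ.1) * u.1 = 0 := by linear_combination hu2 + huz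
    by_cases hsc : cls R (⟨u.1 + zZ.1, hs0, u.1, u.2.1, hsu⟩ : ZD R) = c
    · have e : ann R (u.1 + zZ.1) = ann R zZ.1 :=
        (cls_eq (⟨u.1 + zZ.1, hs0, u.1, u.2.1, hsu⟩ : ZD R) zZ).1 (hsc.trans hzc.symm)
      have h : w.1 ∈ ann R (u.1 + zZ.1) := by rw [e]; exact (mem_ann _ _).2 hwz
      have h' := (mem_ann _ _).1 h
      apply huw
      linear_combination h' - hwz
    · have h := center_mul (⟨u.1 + zZ.1, hs0, u.1, u.2.1, hsu⟩ : ZD R) hsc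
      apply hz2
      linear_combination h - huz
  -- every zero divisor is in ann z
  have zdp : ∀ b : R, b ≠ 0 → ∀ y : R, y ≠ 0 → b * y = 0 → b * zZ.1 = 0 := by
    intro b hb y hy hby
    by_cases hbc : cls R (⟨b, hb, y, hy, hby⟩ : ZD R) = c
    · have e : ann R b = ann R zZ.1 :=
        (cls_eq (⟨b, hb, y, hy, hby⟩ : ZD R) zZ).1 (hbc.trans hzc.symm)
      have h : zZ.1 ∈ ann R b := by rw [e]; exact (mem_ann _ _).2 hz2
      have h' := (mem_ann _ _).1 h
      rw [mul_comm] at h'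
      exact h'
    · exact center_mul (⟨b, hb, y, hy, hby⟩ : ZD R) hbc
  -- ann z is prime
  have ann_az : ∀ a : R, a * zZ.1 ≠ 0 → ann R (a * zZ.1) = ann R zZ.1 := by
    intro a ha
    ext m
    rw [mem_ann, mem_ann]
    constructor
    · intro hm
      by_cases hm0 : m = 0
      · rw [hm0, zero_mul]
      · exact zdp m hm0 (a * zZ.1) ha hm
    · intro hm
      linear_combination a * hm
  have hprime : (ann R zZ.1).IsPrime := by
    constructor
    · intro htop
      have h1 : (1 : R) ∈ ann R zZ.1 := by rw [htop]; trivial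
      rw [mem_ann, one_mul] at h1
      exact hz0 h1
    · intro a b hab
      by_cases hap : a * zZ.1 = 0
      · left; rw [mem_ann]; exact hap
      · right; rw [mem_ann]
        have h1 : (a * b) * zZ.1 = 0 := (mem_ann _ _).1 hab
        have h2 : b ∈ ann R (a * zZ.1) := (mem_ann _ _).2 (by linear_combination h1)
        rw [ann_az a hap] at h2
        exact (mem_ann _ _).1 h2
  -- kill lemma
  have kill : ∀ g : R, g ≠ 0 → g * u.1 = 0 → g * w.1 = 0 →
      ∀ m : R, m * zZ.1 = 0 → g * m = 0 := by
    intro g hg hgu hgw m hm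
    by_cases hgc : cls R (⟨g, hg, u.1, u.2.1, hgu⟩ : ZD R) = c
    · have e : ann R g = ann R zZ.1 :=
        (cls_eq (⟨g, hg, u.1, u.2.1, hgu⟩ : ZD R) zZ).1 (hgc.trans hzc.symm)
      have h : m ∈ ann R g := by rw [e]; exact (mem_ann _ _).2 hm
      have h' := (mem_ann _ _).1 h
      rw [mul_comm] at h'
      exact h'
    · exfalso
      have h1 : cls R (⟨g, hg, u.1, u.2.1, hgu⟩ : ZD R) = cls R u := by
        by_contra hne
        exact nonadj (⟨g, hg, u.1, u.2.1, hgu⟩ : ZD R) u hgc huc hne hgu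
      have h2 : cls R (⟨g, hg, u.1, u.2.1, hgu⟩ : ZD R) = cls R w := by
        by_contra hne
        exact nonadj (⟨g, hg, u.1, u.2.1, hgu⟩ : ZD R) w hgc hwc hne hgw
      exact huw_ne (h1.symm.trans h2)
  have huwA : ∀ m : R, m * zZ.1 = 0 → (u.1 * w.1) * m = 0 := by
    intro m hm
    refine kill _ huw ?_ ?_ m hm
    · linear_combination w.1 * hu2
    · linear_combination u.1 * hw2
  have hxuA : ∀ x : R, x * zZ.1 = 0 → ∀ m : R, m * zZ.1 = 0 → (x * u.1) * m = 0 := by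
    intro x hx m hm
    by_cases h0 : x * u.1 = 0
    · rw [h0, zero_mul]
    · refine kill _ h0 ?_ ?_ m hm
      · linear_combination x * hu2
      · linear_combination huwA x hx
  have hxwA : ∀ x : R, x * zZ.1 = 0 → ∀ m : R, m * zZ.1 = 0 → (x * w.1) * m = 0 := by
    intro x hx m hm
    by_cases h0 : x * w.1 = 0
    · rw [h0, zero_mul]
    · refine kill _ h0 ?_ ?_ m hm
      · linear_combination huwA x hx
      · linear_combination x * hw2
  have proda : ∀ x : R, x * zZ.1 = 0 → ∀ y : R, y * zZ.1 = 0 → ∀ m : R, m * zZ.1 = 0 →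
      (x * y) * m = 0 := by
    intro x hx y hy m hm
    by_cases h0 : x * y = 0
    · rw [h0, zero_mul]
    · refine kill _ h0 ?_ ?_ m hm
      · linear_combination hxuA x hx y hy
      · linear_combination hxwA x hx y hy
  -- p³ = ⊥
  have hp3 : (ann R zZ.1) ^ 3 = ⊥ := by
    have h1 : ann R zZ.1 * ann R zZ.1 ≤ Submodule.annihilator (ann R zZ.1) := by
      rw [Ideal.mul_le]
      intro x hx y hy
      rw [Submodule.mem_annihilator]
      intro m hm
      rw [smul_eq_mul]
      exact proda x ((mem_ann _ _).1 hx) y ((mem_ann _ _).1 hy) m ((mem_ann _ _).1 hm)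
    have h2 : (ann R zZ.1) ^ 3 ≤ ⊥ := by
      have e3 : (ann R zZ.1) ^ 3 = ann R zZ.1 * ann R zZ.1 * ann R zZ.1 := by ring
      rw [e3, Ideal.mul_le]
      intro r hr s hs
      rw [Ideal.mem_bot]
      have h := Submodule.mem_annihilator.1 (h1 hr) s hs
      rwa [smul_eq_mul] at h
    exact le_bot_iff.1 h2
  -- 2 * (u * w) = 0
  have h2uw : (2 : R) * (u.1 * w.1) = 0 := by
    have hs0 : u.1 + w.1 ≠ 0 := by
      intro h0
      apply huw_ne
      apply (cls_eq u w).2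
      have hw' : w.1 = -u.1 := eq_neg_of_add_eq_zero_right h0
      ext m
      rw [mem_ann, mem_ann, hw']
      constructor
      · intro hm; linear_combination -hm
      · intro hm; linear_combination -hm
    have hd0 : u.1 - w.1 ≠ 0 := by
      intro h0
      apply huw_ne
      apply (cls_eq u w).2
      have : u.1 = w.1 := by linear_combination h0
      rw [this]
    have hsz : (u.1 + w.1) * zZ.1 = 0 := by linear_combination huz + hwz
    have hdz : (u.1 - w.1) * zZ.1 = 0 := by linear_combination huz - hwz
    have hsc : cls R (⟨u.1 + w.1, hs0, zZ.1, hz0, hsz⟩ : ZD R) ≠ c := by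
      intro hcc
      have e : ann R (u.1 + w.1) = ann R zZ.1 :=
        (cls_eq (⟨u.1 + w.1, hs0, zZ.1, hz0, hsz⟩ : ZD R) zZ).1 (hcc.trans hzc.symm)
      have h : w.1 ∈ ann R (u.1 + w.1) := by rw [e]; exact (mem_ann _ _).2 hwz
      have h' := (mem_ann _ _).1 h
      apply huw
      linear_combination h' - hw2
    have hdc : cls R (⟨u.1 - w.1, hd0, zZ.1, hz0, hdz⟩ : ZD R) ≠ c := by
      intro hcc
      have e : ann R (u.1 - w.1) = ann R zZ.1 :=
        (cls_eq (⟨u.1 - w.1, hd0, zZ.1, hz0, hdz⟩ : ZD R) zZ).1 (hcc.trans hzc.symm)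
      have h : w.1 ∈ ann R (u.1 - w.1) := by rw [e]; exact (mem_ann _ _).2 hwz
      have h' := (mem_ann _ _).1 h
      apply huw
      linear_combination h' + hw2
    have hsd : (u.1 + w.1) * (u.1 - w.1) = 0 := by linear_combination hu2 - hw2
    have hscd : cls R (⟨u.1 + w.1, hs0, zZ.1, hz0, hsz⟩ : ZD R)
        = cls R (⟨u.1 - w.1, hd0, zZ.1, hz0, hdz⟩ : ZD R) := by
      by_contra hne
      exact nonadj _ _ hsc hdc hne hsd
    have e : ann R (u.1 + w.1) = ann R (u.1 - w.1) := (cls_eq _ _).1 hscd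
    have hss : (u.1 + w.1) * (u.1 + w.1) = 0 := by
      have h1 : (u.1 + w.1) ∈ ann R (u.1 - w.1) := (mem_ann _ _).2 hsd
      rw [← e] at h1
      exact (mem_ann _ _).1 h1
    linear_combination hss - hu2 - hw2
  -- characteristic
  haveI : Nontrivial R := ⟨⟨zZ.1, 0, hz0⟩⟩
  have h2p : (2 : R) ∈ ann R zZ.1 := by
    rw [mem_ann]
    by_cases h20 : (2 : R) = 0
    · rw [h20, zero_mul]
    · exact zdp (2 : R) h20 (u.1 * w.1) huw h2uw
  have h8 : ((8 : ℕ) : R) = 0 := by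
    have h := Ideal.pow_mem_pow h2p 3
    rw [hp3, Ideal.mem_bot] at h
    push_cast
    linear_combination h
  have hchar : ringChar R = 2 ∨ ringChar R = 4 ∨ ringChar R = 8 := by
    have hdvd : ringChar R ∣ 8 := ringChar.dvd h8
    have hne1 : ringChar R ≠ 1 := CharP.ringChar_ne_one
    have hle : ringChar R ≤ 8 := Nat.le_of_dvd (by norm_num) hdvd
    interval_cases h : ringChar R <;> revert hdvd hne1 <;> decide
  refine ⟨⟨ann R zZ.1, ⟨hprime, zZ.1, hz0, rfl⟩, ?_, hp3⟩, hchar⟩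
  rintro q ⟨hq, y, hy0, rfl⟩
  by_cases hyzd : ∃ t : R, t ≠ 0 ∧ y * t = 0
  · obtain ⟨t, ht0, hyt⟩ := hyzd
    by_cases hyc : cls R (⟨y, hy0, t, ht0, hyt⟩ : ZD R) = c
    · exact (cls_eq (⟨y, hy0, t, ht0, hyt⟩ : ZD R) zZ).1 (hyc.trans hzc.symm)
    · exfalso
      have hyz : y * zZ.1 = 0 := center_mul (⟨y, hy0, t, ht0, hyt⟩ : ZD R) hyc
      obtain ⟨aZ, bZ, hac, hbc, hab, hay, hby⟩ :
          ∃ a b : ZD R, cls R a ≠ c ∧ cls R b ≠ c ∧ cls R a ≠ cls R b ∧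
            cls R a ≠ cls R (⟨y, hy0, t, ht0, hyt⟩ : ZD R) ∧
            cls R b ≠ cls R (⟨y, hy0, t, ht0, hyt⟩ : ZD R) := by
        by_cases e1 : cls R (⟨y, hy0, t, ht0, hyt⟩ : ZD R) = cls R x₁
        · refine ⟨x₂, x₃, hx2c, hx3c, hx23, ?_, ?_⟩
          · intro h; exact hx12 ((h.trans e1).symm)
          · intro h; exact hx13 ((h.trans e1).symm)
        · by_cases e2 : cls R (⟨y, hy0, t, ht0, hyt⟩ : ZD R) = cls R x₂
          · refine ⟨x₁, x₃, hx1c, hx3c, hx13, ?_, ?_⟩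
            · intro h; exact hx12 (h.trans e2)
            · intro h; exact hx23 ((h.trans e2).symm)
          · refine ⟨x₁, x₂, hx1c, hx2c, hx12, ?_, ?_⟩
            · intro h; exact e1 h.symm
            · intro h; exact e2 h.symm
      have haq : aZ.1 ∉ ann R y := by
        rw [mem_ann]
        exact nonadj aZ (⟨y, hy0, t, ht0, hyt⟩ : ZD R) hac hyc hay
      have hbq : bZ.1 ∉ ann R y := by
        rw [mem_ann]
        exact nonadj bZ (⟨y, hy0, t, ht0, hyt⟩ : ZD R) hbc hyc hby
      have hmul : aZ.1 * bZ.1 ∈ ann R y := by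
        rw [mem_ann]
        exact proda aZ.1 (center_mul aZ hac) bZ.1 (center_mul bZ hbc) y hyz
      rcases hq.mem_or_mem hmul with h | h
      · exact haq h
      · exact hbq h
  · exfalso
    push_neg at hyzd
    have hbot : ∀ m : R, m ∈ ann R y → m = 0 := by
      intro m hm
      by_contra hm0
      have h := (mem_ann _ _).1 hm
      rw [mul_comm] at h
      exact hyzd m hm0 h
    have h0 : u.1 * zZ.1 ∈ ann R y := by
      rw [mem_ann, huz, zero_mul]
    rcases hq.mem_or_mem h0 with h | h
    · exact u.2.1 (hbot _ h)
    · exact hz0 (hbot _ h)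
end
end

section
/- There exists a commutative Noetherian ring R such that Γ_E(R) has infinitely many vertices. -/
open scoped Classical

noncomputable section

set_option synthInstance.maxHeartbeats 1000000
set_option maxHeartbeats 1000000

/-! ### Auxiliary construction: `R = (ℤ/2)[Z][ε₁, ε₂]`, i.e. `ℤ₂[X,Y,Z]/(X²,Y²)` -/

/-- The base polynomial ring `(ℤ/2)[Z]`. -/
abbrev kk : Type := Polynomial (ZMod 2)

/-- First square-zero extension. -/
abbrev DDD : Type := DualNumber kk

/-- Second square-zero extension: our ring `R`. -/
abbrev RRR : Type := DualNumber DDD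

set_option synthInstance.maxHeartbeats 1000000 in
set_option maxHeartbeats 1000000 in
lemma tszeTower (A : Type*) [CommRing A] :
    IsScalarTower A (TrivSqZeroExt A A) (TrivSqZeroExt A A) := by
  constructor
  intro s x y
  refine TrivSqZeroExt.ext ?_ ?_ <;>
    simp [TrivSqZeroExt.fst_mul, TrivSqZeroExt.snd_mul, smul_eq_mul,
      op_smul_eq_mul] <;> ring

set_option synthInstance.maxHeartbeats 1000000 in
set_option maxHeartbeats 1000000 in
def eDDD : (kk × kk) ≃ₗ[kk] DDD := LinearEquiv.refl kk (kk × kk)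

set_option synthInstance.maxHeartbeats 1000000 in
set_option maxHeartbeats 1000000 in
def eRRR : (DDD × DDD) ≃ₗ[DDD] RRR := LinearEquiv.refl DDD (DDD × DDD)

set_option synthInstance.maxHeartbeats 1000000 in
set_option maxHeartbeats 1000000 in
instance : Module.Finite kk DDD := Module.Finite.equiv eDDD

set_option synthInstance.maxHeartbeats 1000000 in
set_option maxHeartbeats 1000000 in
instance : Module.Finite DDD RRR := Module.Finite.equiv eRRR

instance : IsScalarTower kk DDD DDD := tszeTower kk

set_option synthInstance.maxHeartbeats 1000000 in
set_option maxHeartbeats 1000000 in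
instance : IsScalarTower DDD RRR RRR := tszeTower DDD

set_option synthInstance.maxHeartbeats 1000000 in
set_option maxHeartbeats 1000000 in
instance noethDDD : IsNoetherianRing DDD :=
  isNoetherian_of_tower kk (S := DDD) (M := DDD) inferInstance

set_option synthInstance.maxHeartbeats 1000000 in
set_option maxHeartbeats 1000000 in
instance noethRRR : IsNoetherianRing RRR :=
  isNoetherian_of_tower DDD (S := RRR) (M := RRR) inferInstance

/-- The element `Y·Zⁿ` of `DDD` (here `Y = ε₁`, `Z` the polynomial variable). -/
noncomputable def dd (n : ℕ) : DDD := TrivSqZeroExt.inr (Polynomial.X ^ n)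

/-- The element `aₙ = X + Y·Zⁿ` of `RRR` (here `X = ε₂`). -/
noncomputable def aa (n : ℕ) : RRR :=
  TrivSqZeroExt.inl (dd n) + TrivSqZeroExt.inr 1

set_option synthInstance.maxHeartbeats 1000000 in
set_option maxHeartbeats 1000000 in
lemma aa_mul (n m : ℕ) : aa n * aa m = TrivSqZeroExt.inr (dd n + dd m) := by
  refine TrivSqZeroExt.ext ?_ ?_
  · simp [aa, dd, TrivSqZeroExt.fst_mul]
  · simp [aa, TrivSqZeroExt.snd_mul, smul_eq_mul, op_smul_eq_mul]

set_option synthInstance.maxHeartbeats 1000000 in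
set_option maxHeartbeats 1000000 in
lemma aa_mul_self (n : ℕ) : aa n * aa n = 0 := by
  rw [aa_mul]
  have : dd n + dd n = 0 := by
    rw [dd, ← TrivSqZeroExt.inr_add, CharTwo.add_self_eq_zero, TrivSqZeroExt.inr_zero]
  rw [this, TrivSqZeroExt.inr_zero]

set_option synthInstance.maxHeartbeats 1000000 in
set_option maxHeartbeats 1000000 in
lemma aa_ne_zero (n : ℕ) : aa n ≠ 0 := by
  intro h
  have h1 : (aa n).snd = (0 : RRR).snd := congrArg TrivSqZeroExt.snd h
  simp only [aa, TrivSqZeroExt.snd_add, TrivSqZeroExt.snd_inl, TrivSqZeroExt.snd_inr,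
    TrivSqZeroExt.snd_zero, zero_add] at h1
  exact one_ne_zero h1

set_option synthInstance.maxHeartbeats 1000000 in
set_option maxHeartbeats 1000000 in
lemma aa_mul_eq_zero (n m : ℕ) (h : aa n * aa m = 0) : n = m := by
  rw [aa_mul] at h
  rw [← TrivSqZeroExt.inr_zero (R := DDD)] at h
  have h2 : dd n + dd m = 0 := TrivSqZeroExt.inr_injective h
  rw [dd, dd, ← TrivSqZeroExt.inr_add, ← TrivSqZeroExt.inr_zero (R := kk)] at h2
  have h3 : (Polynomial.X : kk) ^ n + Polynomial.X ^ m = 0 :=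
    TrivSqZeroExt.inr_injective h2
  have h4 : (Polynomial.X : kk) ^ n = Polynomial.X ^ m := by
    have := eq_neg_of_add_eq_zero_left h3
    rwa [CharTwo.neg_eq] at this
  have h5 := congrArg Polynomial.natDegree h4
  rwa [Polynomial.natDegree_X_pow, Polynomial.natDegree_X_pow] at h5

/-- `aₙ` as a nonzero zero divisor. -/
noncomputable def zdaa (n : ℕ) : ZD RRR :=
  ⟨aa n, aa_ne_zero n, aa n, aa_ne_zero n, aa_mul_self n⟩

set_option synthInstance.maxHeartbeats 1000000 in
set_option maxHeartbeats 1000000 in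
lemma cls_zdaa_injective : Function.Injective (fun n => cls RRR (zdaa n)) := by
  intro n m h
  have hann : ann RRR (aa n) = ann RRR (aa m) := Quotient.exact h
  have h1 : aa n ∈ ann RRR (aa n) := by
    rw [ann, Ideal.mem_torsionOf_iff, smul_eq_mul]
    exact aa_mul_self n
  rw [hann, ann, Ideal.mem_torsionOf_iff, smul_eq_mul] at h1
  exact aa_mul_eq_zero n m h1

theorem stmt14 :
    ∃ (R : Type) (_ : CommRing R), IsNoetherianRing R ∧ Infinite (GammaEV R) := by
  exact ⟨RRR, inferInstance, noethRRR, Infinite.of_injective _ cls_zdaa_injective⟩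
end
end

section
/- If [y] is a vertex of Γ_E(R) with deg[y] > deg[x] for every other vertex [x], then ann(y) is a maximal element of F = {ann(z) : 0 ≠ z ∈ R} and hence is an associated prime of R. -/
open scoped Classical

noncomputable section

lemma mem_ann {R : Type*} [CommRing R] {x a : R} : a ∈ ann R x ↔ a * x = 0 := by
  rw [ann, Ideal.mem_torsionOf_iff, smul_eq_mul]

lemma cls_eq_iff {R : Type*} [CommRing R] {a b : ZD R} :
    cls R a = cls R b ↔ ann R a.1 = ann R b.1 := by
  constructor
  · exact fun h => Quotient.exact h
  · exact fun h => Quotient.sound h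

/-- In a Noetherian ring, every annihilator of a nonzero element is contained in a
maximal one. -/
lemma maxAnn_exists {R : Type*} [CommRing R] [IsNoetherianRing R] (y : R) (hy : y ≠ 0) :
    ∃ c : R, c ≠ 0 ∧ ann R y ≤ ann R c ∧ MaxAnn R (ann R c) := by
  have hmax := set_has_maximal_iff_noetherian.mpr (inferInstance : IsNoetherian R R)
  obtain ⟨I, ⟨⟨c, hc, rfl, hle⟩, hImax⟩⟩ :=
    hmax {I : Submodule R R | ∃ c : R, c ≠ 0 ∧ I = ann R c ∧ ann R y ≤ I}
      ⟨ann R y, y, hy, rfl, le_rfl⟩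
  refine ⟨c, hc, hle, ⟨c, hc, rfl⟩, fun w hw hlw => ?_⟩
  by_contra hne
  exact hImax (ann R w) ⟨w, hw, rfl, hle.trans hlw⟩ (lt_of_le_of_ne hlw hne)

/-- A maximal annihilator is prime. -/
lemma maxAnn_isPrime {R : Type*} [CommRing R] {I : Ideal R} (h : MaxAnn R I) : I.IsPrime := by
  obtain ⟨⟨x, hx, rfl⟩, hmax⟩ := h
  constructor
  · rw [ann, Ne, Ideal.torsionOf_eq_top_iff]; exact hx
  · intro r s hrs
    by_cases hr : r ∈ ann R x
    · exact Or.inl hr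
    · right
      have hrx : r * x ≠ 0 := fun h0 => hr (mem_ann.mpr h0)
      have hle : ann R x ≤ ann R (r * x) := by
        intro a ha
        rw [mem_ann] at ha ⊢
        rw [mul_comm r x, ← mul_assoc, ha, zero_mul]
      have heq := hmax (r * x) hrx hle
      have hs : s ∈ ann R (r * x) := by
        rw [mem_ann, ← mul_assoc, mul_comm s r]
        exact mem_ann.mp hrs
      rw [heq]; exact hs

theorem stmt15 (R : Type*) [CommRing R] [IsNoetherianRing R] (b : ZD R)
    (h : ∀ v : GammaEV R, v ≠ cls R b →
      ((gammaE R).neighborSet v).encard <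
        ((gammaE R).neighborSet (cls R b)).encard) :
    MaxAnn R (ann R b.1) ∧ (ann R b.1).IsPrime := by
  have hmax : MaxAnn R (ann R b.1) := by
    refine ⟨⟨b.1, b.2.1, rfl⟩, fun y hy hley => ?_⟩
    by_contra hne
    -- pick a maximal annihilator above ann y
    obtain ⟨c, hc0, hlyc, hcmax⟩ := maxAnn_exists y hy
    have hlebc : ann R b.1 ≤ ann R c := hley.trans hlyc
    have hnebc : ann R b.1 ≠ ann R c := by
      intro heq
      exact hne (le_antisymm hley (heq ▸ hlyc))
    -- c is a nonzero zero divisor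
    obtain ⟨z, hz0, hbz⟩ := b.2.2
    have hzc : c * z = 0 := by
      rw [mul_comm]
      exact mem_ann.mp (hlebc (mem_ann.mpr (by rw [mul_comm]; exact hbz)))
    set c' : ZD R := ⟨c, hc0, z, hz0, hzc⟩ with hc'
    have hclsne : cls R c' ≠ cls R b := fun hq => hnebc (cls_eq_iff.mp hq).symm
    -- build an injection from N(cls b) into N(cls c')
    set f : GammaEV R → GammaEV R := fun v => if v = cls R c' then cls R b else v with hf
    have hmaps : ∀ v ∈ (gammaE R).neighborSet (cls R b),
        f v ∈ (gammaE R).neighborSet (cls R c') := by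
      rintro v ⟨hvne, a, a', ha, ha', haa'⟩
      by_cases hvc : v = cls R c'
      · -- f v = cls b; show cls b is a neighbor of cls c'
        simp only [hf, hvc, if_pos rfl]
        refine ⟨hclsne.symm ∘ Eq.symm, c', a, rfl, ha, ?_⟩
        -- a.1 * a'.1 = 0 and ann a' = ann c, so a.1 * c = 0
        have hann : ann R a'.1 = ann R c := cls_eq_iff.mp (ha'.trans hvc)
        have : a.1 ∈ ann R c := hann ▸ mem_ann.mpr haa'
        rw [mul_comm]
        exact mem_ann.mp this
      · simp only [hf, if_neg hvc]
        refine ⟨Ne.symm hvc, c', a', rfl, ha', ?_⟩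
        -- a'.1 ∈ ann a = ann b ≤ ann c
        have hann : ann R a.1 = ann R b.1 := cls_eq_iff.mp ha
        have : a'.1 ∈ ann R b.1 := hann ▸ mem_ann.mpr (by rwa [mul_comm] at haa')
        have := hlebc this
        rw [mul_comm]
        exact mem_ann.mp this
    have hinj : Set.InjOn f ((gammaE R).neighborSet (cls R b)) := by
      intro u hu w hw hfuw
      have hub : u ≠ cls R b := fun he => ((gammaE R).mem_neighborSet _ _).mp hu |>.1 he.symm
      have hwb : w ≠ cls R b := fun he => ((gammaE R).mem_neighborSet _ _).mp hw |>.1 he.symm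
      by_cases huc : u = cls R c' <;> by_cases hwc : w = cls R c'
      · rw [huc, hwc]
      · rw [hf] at hfuw
        simp only [if_pos huc, if_neg hwc] at hfuw
        exact absurd hfuw.symm hwb
      · rw [hf] at hfuw
        simp only [if_pos hwc, if_neg huc] at hfuw
        exact absurd hfuw hub
      · rw [hf] at hfuw
        simpa only [if_neg huc, if_neg hwc] using hfuw
    have hcard : ((gammaE R).neighborSet (cls R b)).encard ≤
        ((gammaE R).neighborSet (cls R c')).encard := by
      rw [← hinj.encard_image]
      exact Set.encard_le_encard (Set.image_subset_iff.mpr hmaps)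
    exact absurd hcard (not_le.mpr (h (cls R c') hclsne))
  exact ⟨hmax, maxAnn_isPrime hmax⟩
end
end
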